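/- Let A and B be real d×d matrices, γ ∈ (0,1), U = A − B, and let 𝒜 = supp(A) ⊆ {1,…,d}² be the set of index pairs where A is nonzero. Then γ·|U|₁ + |A|₁ − |B|₁ ≤ (1+γ)·|U_{|𝒜}|₁ − (1−γ)·|U_{|𝒜ᶜ}|₁ ≤ (1+γ)·√(‖A‖₀)·‖U_{|𝒜}‖_F − (1−γ)·|U_{|𝒜ᶜ}|₁, where |·|₁ is the entrywise ℓ¹ norm, ‖·‖_F is the Frobenius norm, ‖A‖₀ is the number of nonzero entries of A, and U_{|S} denotes the matrix equal to U on index set S and zero elsewhere. -/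

import Mathlib

open Matrix

/-- Entrywise ℓ¹ norm of a matrix. -/
noncomputable def matL1 {d : ℕ} (M : Matrix (Fin d) (Fin d) ℝ) : ℝ :=
  ∑ i, ∑ j, |M i j|

/-- Frobenius norm of a matrix. -/
noncomputable def matFrob {d : ℕ} (M : Matrix (Fin d) (Fin d) ℝ) : ℝ :=
  Real.sqrt (∑ i, ∑ j, (M i j) ^ 2)

open Classical in
/-- Restriction of a matrix to a set of index pairs (zero outside the set). -/
noncomputable def matRestrict {d : ℕ} (M : Matrix (Fin d) (Fin d) ℝ)
    (S : Set (Fin d × Fin d)) : Matrix (Fin d) (Fin d) ℝ :=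
  fun i j => if (i, j) ∈ S then M i j else 0

/-- For `U = A - B`, `γ ∈ (0,1)` and `𝒜 = supp A`,
`γ|U|₁ + |A|₁ - |B|₁ ≤ (1+γ)|U_𝒜|₁ - (1-γ)|U_𝒜ᶜ|₁
  ≤ (1+γ)√‖A‖₀ ‖U_𝒜‖_F - (1-γ)|U_𝒜ᶜ|₁`. -/
theorem stmt_5 (d : ℕ) (A B : Matrix (Fin d) (Fin d) ℝ)
    (γ : ℝ) (hγ0 : 0 < γ) (hγ1 : γ < 1)
    (U : Matrix (Fin d) (Fin d) ℝ) (hU : U = A - B)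
    (𝒜 : Set (Fin d × Fin d)) (h𝒜 : 𝒜 = {p : Fin d × Fin d | A p.1 p.2 ≠ 0}) :
    γ * matL1 U + matL1 A - matL1 B ≤
      (1 + γ) * matL1 (matRestrict U 𝒜) - (1 - γ) * matL1 (matRestrict U 𝒜ᶜ) ∧
    (1 + γ) * matL1 (matRestrict U 𝒜) - (1 - γ) * matL1 (matRestrict U 𝒜ᶜ) ≤
      (1 + γ) * Real.sqrt ({p : Fin d × Fin d | A p.1 p.2 ≠ 0}.ncard) *
          matFrob (matRestrict U 𝒜) -
        (1 - γ) * matL1 (matRestrict U 𝒜ᶜ) := by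
  classical
  subst hU h𝒜
  set 𝒜 : Set (Fin d × Fin d) := {p : Fin d × Fin d | A p.1 p.2 ≠ 0} with h𝒜
  constructor
  · have key : ∀ i j, γ * |(A - B) i j| + |A i j| - |B i j| ≤
        (1 + γ) * |matRestrict (A - B) 𝒜 i j| -
        (1 - γ) * |matRestrict (A - B) 𝒜ᶜ i j| := by
      intro i j
      by_cases h : A i j = 0
      · have h1 : ((i, j) : Fin d × Fin d) ∉ 𝒜 := by simp [h𝒜, h]
        have h2 : ((i, j) : Fin d × Fin d) ∈ 𝒜ᶜ := h1
        simp only [matRestrict, Matrix.sub_apply, h, zero_sub, abs_neg, abs_zero,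
          if_neg h1, if_pos h2]
        linarith [abs_nonneg (B i j)]
      · have h1 : ((i, j) : Fin d × Fin d) ∈ 𝒜 := by simp [h𝒜, h]
        have h3 : ((i, j) : Fin d × Fin d) ∉ 𝒜ᶜ := fun hc => hc h1
        simp only [matRestrict, Matrix.sub_apply, if_pos h1, if_neg h3, abs_zero]
        have h2 : |A i j| - |B i j| ≤ |A i j - B i j| := abs_sub_abs_le_abs_sub _ _
        linarith [abs_nonneg (A i j - B i j)]
    have hsum : ∑ i, ∑ j, (γ * |(A - B) i j| + |A i j| - |B i j|) ≤
        ∑ i, ∑ j, ((1 + γ) * |matRestrict (A - B) 𝒜 i j| -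
          (1 - γ) * |matRestrict (A - B) 𝒜ᶜ i j|) :=
      Finset.sum_le_sum fun i _ => Finset.sum_le_sum fun j _ => key i j
    calc γ * matL1 (A - B) + matL1 A - matL1 B
        = ∑ i, ∑ j, (γ * |(A - B) i j| + |A i j| - |B i j|) := by
          simp [matL1, Finset.mul_sum, Finset.sum_add_distrib, Finset.sum_sub_distrib]
      _ ≤ ∑ i, ∑ j, ((1 + γ) * |matRestrict (A - B) 𝒜 i j| -
            (1 - γ) * |matRestrict (A - B) 𝒜ᶜ i j|) := hsum
      _ = (1 + γ) * matL1 (matRestrict (A - B) 𝒜) -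
            (1 - γ) * matL1 (matRestrict (A - B) 𝒜ᶜ) := by
          simp [matL1, Finset.mul_sum, Finset.sum_sub_distrib]
  · set S : Finset (Fin d × Fin d) := Finset.univ.filter (fun p => A p.1 p.2 ≠ 0) with hS
    have hN : (𝒜.ncard : ℝ) = (S.card : ℝ) := by
      norm_cast
      rw [← Set.ncard_coe_finset]
      congr 1
      ext p
      simp [hS, h𝒜]
    have hL1 : matL1 (matRestrict (A - B) 𝒜) = ∑ p ∈ S, |(A - B) p.1 p.2| := by
      rw [matL1, ← Finset.sum_product']
      rw [hS, Finset.sum_filter]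
      apply Finset.sum_congr rfl
      intro p _
      simp only [matRestrict, h𝒜, Set.mem_setOf_eq]
      split <;> simp
    have hF : matFrob (matRestrict (A - B) 𝒜) = Real.sqrt (∑ p ∈ S, ((A - B) p.1 p.2) ^ 2) := by
      rw [matFrob, ← Finset.sum_product']
      congr 1
      rw [hS, Finset.sum_filter]
      apply Finset.sum_congr rfl
      intro p _
      simp only [matRestrict, h𝒜, Set.mem_setOf_eq]
      split <;> simp
    have hCS : (∑ p ∈ S, |(A - B) p.1 p.2|) ^ 2 ≤
        (S.card : ℝ) * ∑ p ∈ S, ((A - B) p.1 p.2) ^ 2 := by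
      have := Finset.sum_mul_sq_le_sq_mul_sq S (fun _ => (1 : ℝ))
        (fun p => |(A - B) p.1 p.2|)
      simpa [sq_abs, Finset.sum_const, mul_comm] using this
    have hkey : matL1 (matRestrict (A - B) 𝒜) ≤
        Real.sqrt (𝒜.ncard : ℝ) * matFrob (matRestrict (A - B) 𝒜) := by
      rw [hL1, hF, hN, ← Real.sqrt_mul (by positivity)]
      have h0 : (0 : ℝ) ≤ ∑ p ∈ S, |(A - B) p.1 p.2| :=
        Finset.sum_nonneg fun p _ => abs_nonneg _
      nlinarith [Real.sq_sqrt (le_trans (by positivity) hCS),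
        Real.sqrt_nonneg ((S.card : ℝ) * ∑ p ∈ S, ((A - B) p.1 p.2) ^ 2), hCS]
    have := mul_le_mul_of_nonneg_left hkey (by linarith : (0:ℝ) ≤ 1 + γ)
    linarith [this]
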